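/- Let k ≥ 1 be an integer and let n₁, …, n_k be integers with n_i ≥ 1 for every i. Then for every integer m ≥ 3 and all reals t ≥ 1, u ≥ 1, v ≥ 1, one has m·Σ_{i=1}^{k} (t²uv + t^{2n_i+1}(uv)^{n_i+1}) < (∏_{i=1}^{k} Σ_{j=0}^{n_i} t^{2j}(uv)^j)^m. -/

import Mathlib

private lemma aux_one_add_sum_le_prod (s : Finset ℕ) (f : ℕ → ℝ)
    (hf : ∀ i ∈ s, 0 ≤ f i) :
    1 + ∑ i ∈ s, f i ≤ ∏ i ∈ s, (1 + f i) := by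
  induction s using Finset.cons_induction with
  | empty => simp
  | cons a s ha ih =>
    rw [Finset.sum_cons, Finset.prod_cons]
    have h1 : 0 ≤ f a := hf a (Finset.mem_cons_self a s)
    have h2 : ∀ i ∈ s, 0 ≤ f i := fun i hi => hf i (Finset.mem_cons_of_mem hi)
    have h3 := ih h2
    have h4 : 0 ≤ ∑ i ∈ s, f i := Finset.sum_nonneg h2
    nlinarith [Finset.sum_nonneg h2]

private lemma aux_m_le : ∀ m : ℕ, 3 ≤ m → (m : ℝ) ≤ 3 * 2 ^ (m - 3) := by
  intro m hm
  induction m, hm using Nat.le_induction with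
  | base => norm_num
  | succ m hm ih =>
    have : m + 1 - 3 = (m - 3) + 1 := by omega
    rw [this, pow_succ]
    push_cast
    have h2 : (1:ℝ) ≤ 2 ^ (m - 3) := one_le_pow₀ (by norm_num)
    nlinarith

theorem stmt_16 (k : ℕ) (hk : 1 ≤ k) (n : ℕ → ℕ)
    (hn : ∀ i ∈ Finset.range k, 1 ≤ n i) :
    ∀ m : ℕ, 3 ≤ m → ∀ t u v : ℝ, 1 ≤ t → 1 ≤ u → 1 ≤ v →
      (m : ℝ) * (∑ i ∈ Finset.range k,
          (t ^ 2 * (u * v) + t ^ (2 * n i + 1) * (u * v) ^ (n i + 1))) <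
        (∏ i ∈ Finset.range k,
          ∑ j ∈ Finset.range (n i + 1), t ^ (2 * j) * (u * v) ^ j) ^ m := by
  intro m hm t u v ht hu hv
  set w : ℝ := u * v with hw_def
  have hw : 1 ≤ w := by nlinarith
  have ht0 : (0:ℝ) < t := lt_of_lt_of_le one_pos ht
  have hw0 : (0:ℝ) < w := lt_of_lt_of_le one_pos hw
  set A : ℕ → ℝ := fun i => t ^ 2 * w + t ^ (2 * n i + 1) * w ^ (n i + 1) with hA_def
  set S : ℕ → ℝ := fun i => ∑ j ∈ Finset.range (n i + 1), t ^ (2 * j) * w ^ j with hS_def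
  -- per-index facts
  have key : ∀ i ∈ Finset.range k, 1 + 3 * A i ≤ (S i) ^ 3 ∧ 2 ≤ S i := by
    intro i hi
    have hni : 1 ≤ n i := hn i hi
    have hc : (1:ℝ) ≤ t ^ 2 * w := by nlinarith [one_le_pow₀ ht (n:=2)]
    have hB : (1:ℝ) ≤ t ^ (2 * n i) * w ^ (n i) :=
      by nlinarith [one_le_pow₀ ht (n:=2*n i), one_le_pow₀ hw (n:=n i)]
    have hterm : ∀ j ∈ Finset.range (n i + 1), 0 ≤ t ^ (2 * j) * w ^ j := by
      intro j _; positivity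
    -- S ≥ 1 + t^2 w
    have hS1 : 1 + t ^ 2 * w ≤ S i := by
      have hsub : ({0, 1} : Finset ℕ) ⊆ Finset.range (n i + 1) := by
        intro x hx
        simp only [Finset.mem_insert, Finset.mem_singleton] at hx
        rcases hx with rfl | rfl <;> simp [Finset.mem_range] <;> omega
      have := Finset.sum_le_sum_of_subset_of_nonneg hsub (fun j hj _ => hterm j hj)
      calc 1 + t ^ 2 * w = ∑ j ∈ ({0,1} : Finset ℕ), t ^ (2 * j) * w ^ j := by
            norm_num
        _ ≤ S i := this
    -- S ≥ 1 + t^(2n) w^n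
    have hS2 : 1 + t ^ (2 * n i) * w ^ (n i) ≤ S i := by
      have hsub : ({0, n i} : Finset ℕ) ⊆ Finset.range (n i + 1) := by
        intro x hx
        simp only [Finset.mem_insert, Finset.mem_singleton] at hx
        rcases hx with rfl | rfl <;> simp [Finset.mem_range]
      have hsum := Finset.sum_le_sum_of_subset_of_nonneg hsub (fun j hj _ => hterm j hj)
      have hne : (0 : ℕ) ≠ n i := by omega
      calc 1 + t ^ (2 * n i) * w ^ (n i)
          = ∑ j ∈ ({0, n i} : Finset ℕ), t ^ (2 * j) * w ^ j := by
            rw [Finset.sum_pair hne]; norm_num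
        _ ≤ S i := hsum
    -- bound the second part of A by (t^2 w)(t^(2n) w^n)
    have hAB : t ^ (2 * n i + 1) * w ^ (n i + 1) ≤ (t ^ 2 * w) * (t ^ (2 * n i) * w ^ (n i)) := by
      have h1 : t ^ (2 * n i + 1) ≤ t ^ (2 * n i + 2) :=
        pow_le_pow_right₀ ht (by omega)
      have h2 : (t ^ 2 * w) * (t ^ (2 * n i) * w ^ (n i)) = t ^ (2 * n i + 2) * w ^ (n i + 1) := by
        rw [pow_add, pow_succ]; ring
      rw [h2]
      have : (0:ℝ) ≤ w ^ (n i + 1) := by positivity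
      exact mul_le_mul_of_nonneg_right h1 this
    constructor
    · set c := t ^ 2 * w
      set B := t ^ (2 * n i) * w ^ (n i)
      have hS3 : (1 + c) ^ 2 * (1 + B) ≤ (S i) ^ 3 := by
        have h1 : (0:ℝ) ≤ 1 + c := by linarith
        have h2 : (0:ℝ) ≤ 1 + B := by linarith
        calc (1 + c) ^ 2 * (1 + B) ≤ (S i) ^ 2 * (S i) := by
              apply mul_le_mul (pow_le_pow_left₀ h1 hS1 2) hS2 h2 (by positivity)
          _ = (S i) ^ 3 := by ring
      have : 1 + 3 * A i ≤ (1 + c) ^ 2 * (1 + B) := by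
        simp only [hA_def]
        nlinarith [hAB, hc, hB, mul_nonneg (mul_nonneg (sub_nonneg.2 hc) (by linarith : (0:ℝ) ≤ c)) (by linarith : (0:ℝ) ≤ B), mul_nonneg (sub_nonneg.2 hc) (by linarith : (0:ℝ) ≤ c)]
      linarith
    · linarith
  -- product bounds
  have hA0 : ∀ i ∈ Finset.range k, 0 ≤ A i := by
    intro i _; simp only [hA_def]; positivity
  have hP3 : 1 + 3 * ∑ i ∈ Finset.range k, A i ≤ (∏ i ∈ Finset.range k, S i) ^ 3 := by
    calc 1 + 3 * ∑ i ∈ Finset.range k, A i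
        = 1 + ∑ i ∈ Finset.range k, 3 * A i := by rw [Finset.mul_sum]
      _ ≤ ∏ i ∈ Finset.range k, (1 + 3 * A i) :=
          aux_one_add_sum_le_prod _ _ (fun i hi => by nlinarith [hA0 i hi])
      _ ≤ ∏ i ∈ Finset.range k, (S i) ^ 3 := by
          apply Finset.prod_le_prod
          · intro i hi; nlinarith [hA0 i hi]
          · intro i hi; exact (key i hi).1
      _ = (∏ i ∈ Finset.range k, S i) ^ 3 := Finset.prod_pow _ _ _
  have hP2 : 2 ≤ ∏ i ∈ Finset.range k, S i := by
    calc (2:ℝ) = 2 ^ 1 := (pow_one 2).symm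
      _ ≤ 2 ^ k := pow_le_pow_right₀ (by norm_num) hk
      _ = ∏ _i ∈ Finset.range k, 2 := by rw [Finset.prod_const, Finset.card_range]
      _ ≤ ∏ i ∈ Finset.range k, S i :=
          Finset.prod_le_prod (fun _ _ => by norm_num) (fun i hi => (key i hi).2)
  set P := ∏ i ∈ Finset.range k, S i with hP_def
  set Sg := ∑ i ∈ Finset.range k, A i with hSg_def
  have hSg0 : 0 ≤ Sg := Finset.sum_nonneg hA0
  have hP0 : 0 < P := lt_of_lt_of_le two_pos hP2
  have hm3 : (m:ℝ) ≤ 3 * 2 ^ (m - 3) := aux_m_le m hm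
  have hpowsplit : P ^ m = P ^ (m - 3) * P ^ 3 := by
    rw [← pow_add]; congr 1; omega
  have h2m : (2:ℝ) ^ (m - 3) ≤ P ^ (m - 3) := pow_le_pow_left₀ (by norm_num) hP2 _
  have hfin : (2:ℝ) ^ (m - 3) * (1 + 3 * Sg) ≤ P ^ m := by
    rw [hpowsplit]
    exact mul_le_mul h2m hP3 (by linarith) (le_of_lt (pow_pos hP0 _))
  have h2pos : (0:ℝ) < 2 ^ (m - 3) := by positivity
  calc (m : ℝ) * Sg ≤ 3 * 2 ^ (m - 3) * Sg := mul_le_mul_of_nonneg_right hm3 hSg0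
    _ < 2 ^ (m - 3) * (1 + 3 * Sg) := by
        have hr : (2:ℝ) ^ (m - 3) * (1 + 3 * Sg) = 2 ^ (m - 3) + 3 * 2 ^ (m - 3) * Sg := by ring
        rw [hr]; linarith
    _ ≤ P ^ m := hfin
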